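/- Let M > 1, n ≥ 1 a natural number, and v ≥ 0 with (n−1)·M·v ≤ (M−1)·n. Define ᾱ = (M(1+M)v − n(2 + Mv + M²v) + √((−M(1+M)v + n(2 + Mv + M²v))² + 4(M−1)(1+M)Mn²))/(2(M−1)Mn), the positive root of the quadratic t(α) = (M−1)Mnα² + (−M(1+M)v + n(2+Mv+M²v))α − (1+M)n. Then h(ᾱ) ≤ 0, where h(α) = (M−1)Mnα³ − (M+1)(M−2)nα² − (4n+(M−1)(n−1)v)α + 2n. -/

import Mathlib

set_option maxHeartbeats 1000000

/-- The cubic `h(α)` from the two-step stochastic stepsize schedule analysis. -/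
noncomputable def hcub (M n v α : ℝ) : ℝ :=
  (M - 1) * M * n * α ^ 3 - (M + 1) * (M - 2) * n * α ^ 2
    - (4 * n + (M - 1) * (n - 1) * v) * α + 2 * n

/-- The auxiliary quadratic `t(α)` from the two-step stochastic stepsize
schedule analysis. -/
noncomputable def tquad (M n v α : ℝ) : ℝ :=
  (M - 1) * M * n * α ^ 2
    + (-(M * (1 + M) * v) + n * (2 + M * v + M ^ 2 * v)) * α
    - (1 + M) * n

noncomputable def Faux (m k v : ℝ) : ℝ :=
  16 * m ^ 1 * k ^ 2 * v ^ 2 + 32 * m ^ 1 * k ^ 3 * v ^ 2 + 16 * m ^ 1 * k ^ 4 * v ^ 2 + 64 * m ^ 2 * k ^ 2 * v ^ 2 + 128 * m ^ 2 * k ^ 3 * v ^ 2 + 64 * m ^ 2 * k ^ 4 * v ^ 2 + 8 * m ^ 3 * k ^ 1 * v ^ 1 + 24 * m ^ 3 * k ^ 2 * v ^ 1 + 104 * m ^ 3 * k ^ 2 * v ^ 2 + 24 * m ^ 3 * k ^ 3 * v ^ 1 + 208 * m ^ 3 * k ^ 3 * v ^ 2 + 8 * m ^ 3 * k ^ 4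 * v ^ 1 + 104 * m ^ 3 * k ^ 4 * v ^ 2 + 24 * m ^ 4 * k ^ 1 * v ^ 1 + 72 * m ^ 4 * k ^ 2 * v ^ 1 + 88 * m ^ 4 * k ^ 2 * v ^ 2 + 72 * m ^ 4 * k ^ 3 * v ^ 1 + 176 * m ^ 4 * k ^ 3 * v ^ 2 + 24 * m ^ 4 * k ^ 4 * v ^ 1 + 88 * m ^ 4 * k ^ 4 * v ^ 2 + 1 * m ^ 5 * k ^ 0 * v ^ 0 + 4 * m ^ 5 * k ^ 1 * v ^ 0 + 26 * m ^ 5 * k ^ 1 * v ^ 1 + 6 * m ^ 5 * k ^ 2 * v ^ 0 + 78 * m ^ 5 * k ^ 2 * v ^ 1 + 41 * m ^ 5 * k ^ 2 * v ^ 2 + 4 * m ^ 5 * k ^ 3 * v ^ 0 + 78 * m ^ 5 * k ^ 3 * v ^ 1 + 82 * m ^ 5 * k ^ 3 * v ^ 2 + 1 * m ^ 5 * k ^ 4 * v ^ 0 + 26 * m ^ 5 * k ^ 4 * v ^ 1 + 41 * m ^ 5 * k ^ 4 * v ^ 2 + 2 * m ^ 6 * k ^ 0 * v ^ 0 + 8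 * m ^ 6 * k ^ 1 * v ^ 0 + 12 * m ^ 6 * k ^ 1 * v ^ 1 + 12 * m ^ 6 * k ^ 2 * v ^ 0 + 36 * m ^ 6 * k ^ 2 * v ^ 1 + 10 * m ^ 6 * k ^ 2 * v ^ 2 + 8 * m ^ 6 * k ^ 3 * v ^ 0 + 36 * m ^ 6 * k ^ 3 * v ^ 1 + 20 * m ^ 6 * k ^ 3 * v ^ 2 + 2 * m ^ 6 * k ^ 4 * v ^ 0 + 12 * m ^ 6 * k ^ 4 * v ^ 1 + 10 * m ^ 6 * k ^ 4 * v ^ 2 + 1 * m ^ 7 * k ^ 0 * v ^ 0 + 4 * m ^ 7 * k ^ 1 * v ^ 0 + 2 * m ^ 7 * k ^ 1 * v ^ 1 + 6 * m ^ 7 * k ^ 2 * v ^ 0 + 6 * m ^ 7 * k ^ 2 * v ^ 1 + 1 * m ^ 7 * k ^ 2 * v ^ 2 + 4 * m ^ 7 * k ^ 3 * v ^ 0 + 6 * m ^ 7 * k ^ 3 * v ^ 1 + 2 * m ^ 7 * k ^ 3 * v ^ 2 + 1 * m ^ 7 * k ^ 4 * v ^ 0 + 2 * m ^ 7 * k ^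 4 * v ^ 1 + 1 * m ^ 7 * k ^ 4 * v ^ 2

lemma Faux_nonneg (m k v : ℝ) (hm : 0 ≤ m) (hk : 0 ≤ k) (hv : 0 ≤ v) :
    0 ≤ Faux m k v := by
  unfold Faux
  exact (add_nonneg (add_nonneg (add_nonneg (add_nonneg (add_nonneg (add_nonneg (add_nonneg (add_nonneg (add_nonneg (add_nonneg (add_nonneg (add_nonneg (add_nonneg (add_nonneg (add_nonneg (add_nonneg (add_nonneg (add_nonneg (add_nonneg (add_nonneg (add_nonneg (add_nonneg (add_nonneg (add_nonneg (add_nonneg (add_nonneg (add_nonneg (add_nonneg (add_nonneg (add_nonneg (add_nonneg (add_nonneg (add_nonneg (add_nonneg (add_nonneg (add_nonneg (add_nonneg (add_nonneg (add_nonneg (add_nonneg (add_nonneg (add_nonneg (add_nonneg (add_nonneg (add_nonneg (add_nonneg (add_nonneg (add_nonneg (add_nonneg (add_nonneg (add_nonneg (add_nonneg (add_nonneg (add_nonneg (add_nonneg (mul_nonneg (mul_nonneg (mul_nonneg (by norm_num : (0:ℝ) ≤ 16) (pow_nonneg hm 1)) (pow_nonneg hk 2)) (pow_nonneg hv 2))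 (mul_nonneg (mul_nonneg (mul_nonneg (by norm_num : (0:ℝ) ≤ 32) (pow_nonneg hm 1)) (pow_nonneg hk 3)) (pow_nonneg hv 2))) (mul_nonneg (mul_nonneg (mul_nonneg (by norm_num : (0:ℝ) ≤ 16) (pow_nonneg hm 1)) (pow_nonneg hk 4)) (pow_nonneg hv 2))) (mul_nonneg (mul_nonneg (mul_nonneg (by norm_num : (0:ℝ) ≤ 64) (pow_nonneg hm 2)) (pow_nonneg hk 2)) (pow_nonneg hv 2))) (mul_nonneg (mul_nonneg (mul_nonneg (by norm_num : (0:ℝ) ≤ 128) (pow_nonneg hm 2)) (pow_nonneg hk 3)) (pow_nonneg hv 2))) (mul_nonneg (mul_nonneg (mul_nonneg (by norm_num : (0:ℝ) ≤ 64) (pow_nonneg hm 2)) (pow_nonneg hk 4)) (pow_nonneg hv 2))) (mul_nonneg (mul_nonneg (mul_nonneg (by norm_num : (0:ℝ) ≤ 8) (pow_nonneg hm 3)) (pow_nonneg hk 1)) (pow_nonneg hv 1))) (mul_nonneg (mul_nonneg (mul_nonneg (by norm_num : (0:ℝ) ≤ 24) (pow_nonneg hm 3)) (pow_nonneg hk 2))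 (pow_nonneg hv 1))) (mul_nonneg (mul_nonneg (mul_nonneg (by norm_num : (0:ℝ) ≤ 104) (pow_nonneg hm 3)) (pow_nonneg hk 2)) (pow_nonneg hv 2))) (mul_nonneg (mul_nonneg (mul_nonneg (by norm_num : (0:ℝ) ≤ 24) (pow_nonneg hm 3)) (pow_nonneg hk 3)) (pow_nonneg hv 1))) (mul_nonneg (mul_nonneg (mul_nonneg (by norm_num : (0:ℝ) ≤ 208) (pow_nonneg hm 3)) (pow_nonneg hk 3)) (pow_nonneg hv 2))) (mul_nonneg (mul_nonneg (mul_nonneg (by norm_num : (0:ℝ) ≤ 8) (pow_nonneg hm 3)) (pow_nonneg hk 4)) (pow_nonneg hv 1))) (mul_nonneg (mul_nonneg (mul_nonneg (by norm_num : (0:ℝ) ≤ 104) (pow_nonneg hm 3)) (pow_nonneg hk 4)) (pow_nonneg hv 2))) (mul_nonneg (mul_nonneg (mul_nonneg (by norm_num : (0:ℝ) ≤ 24) (pow_nonneg hm 4)) (pow_nonneg hk 1)) (pow_nonneg hv 1))) (mul_nonneg (mul_nonneg (mul_nonneg (by norm_num : (0:ℝ) ≤ 72) (pow_nonneg hm 4))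 (pow_nonneg hk 2)) (pow_nonneg hv 1))) (mul_nonneg (mul_nonneg (mul_nonneg (by norm_num : (0:ℝ) ≤ 88) (pow_nonneg hm 4)) (pow_nonneg hk 2)) (pow_nonneg hv 2))) (mul_nonneg (mul_nonneg (mul_nonneg (by norm_num : (0:ℝ) ≤ 72) (pow_nonneg hm 4)) (pow_nonneg hk 3)) (pow_nonneg hv 1))) (mul_nonneg (mul_nonneg (mul_nonneg (by norm_num : (0:ℝ) ≤ 176) (pow_nonneg hm 4)) (pow_nonneg hk 3)) (pow_nonneg hv 2))) (mul_nonneg (mul_nonneg (mul_nonneg (by norm_num : (0:ℝ) ≤ 24) (pow_nonneg hm 4)) (pow_nonneg hk 4)) (pow_nonneg hv 1))) (mul_nonneg (mul_nonneg (mul_nonneg (by norm_num : (0:ℝ) ≤ 88) (pow_nonneg hm 4)) (pow_nonneg hk 4)) (pow_nonneg hv 2))) (mul_nonneg (mul_nonneg (mul_nonneg (by norm_num : (0:ℝ) ≤ 1) (pow_nonneg hm 5)) (pow_nonneg hk 0)) (pow_nonneg hv 0))) (mul_nonneg (mul_nonneg (mul_nonneg (by norm_num : (0:ℝ) ≤ 4)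 (pow_nonneg hm 5)) (pow_nonneg hk 1)) (pow_nonneg hv 0))) (mul_nonneg (mul_nonneg (mul_nonneg (by norm_num : (0:ℝ) ≤ 26) (pow_nonneg hm 5)) (pow_nonneg hk 1)) (pow_nonneg hv 1))) (mul_nonneg (mul_nonneg (mul_nonneg (by norm_num : (0:ℝ) ≤ 6) (pow_nonneg hm 5)) (pow_nonneg hk 2)) (pow_nonneg hv 0))) (mul_nonneg (mul_nonneg (mul_nonneg (by norm_num : (0:ℝ) ≤ 78) (pow_nonneg hm 5)) (pow_nonneg hk 2)) (pow_nonneg hv 1))) (mul_nonneg (mul_nonneg (mul_nonneg (by norm_num : (0:ℝ) ≤ 41) (pow_nonneg hm 5)) (pow_nonneg hk 2)) (pow_nonneg hv 2))) (mul_nonneg (mul_nonneg (mul_nonneg (by norm_num : (0:ℝ) ≤ 4) (pow_nonneg hm 5)) (pow_nonneg hk 3)) (pow_nonneg hv 0))) (mul_nonneg (mul_nonneg (mul_nonneg (by norm_num : (0:ℝ) ≤ 78) (pow_nonneg hm 5)) (pow_nonneg hk 3)) (pow_nonneg hv 1))) (mul_nonneg (mul_nonneg (mul_nonneg (by norm_num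 : (0:ℝ) ≤ 82) (pow_nonneg hm 5)) (pow_nonneg hk 3)) (pow_nonneg hv 2))) (mul_nonneg (mul_nonneg (mul_nonneg (by norm_num : (0:ℝ) ≤ 1) (pow_nonneg hm 5)) (pow_nonneg hk 4)) (pow_nonneg hv 0))) (mul_nonneg (mul_nonneg (mul_nonneg (by norm_num : (0:ℝ) ≤ 26) (pow_nonneg hm 5)) (pow_nonneg hk 4)) (pow_nonneg hv 1))) (mul_nonneg (mul_nonneg (mul_nonneg (by norm_num : (0:ℝ) ≤ 41) (pow_nonneg hm 5)) (pow_nonneg hk 4)) (pow_nonneg hv 2))) (mul_nonneg (mul_nonneg (mul_nonneg (by norm_num : (0:ℝ) ≤ 2) (pow_nonneg hm 6)) (pow_nonneg hk 0)) (pow_nonneg hv 0))) (mul_nonneg (mul_nonneg (mul_nonneg (by norm_num : (0:ℝ) ≤ 8) (pow_nonneg hm 6)) (pow_nonneg hk 1)) (pow_nonneg hv 0))) (mul_nonneg (mul_nonneg (mul_nonneg (by norm_num : (0:ℝ) ≤ 12) (pow_nonneg hm 6)) (pow_nonneg hk 1)) (pow_nonneg hv 1))) (mul_nonneg (mul_nonneg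 (mul_nonneg (by norm_num : (0:ℝ) ≤ 12) (pow_nonneg hm 6)) (pow_nonneg hk 2)) (pow_nonneg hv 0))) (mul_nonneg (mul_nonneg (mul_nonneg (by norm_num : (0:ℝ) ≤ 36) (pow_nonneg hm 6)) (pow_nonneg hk 2)) (pow_nonneg hv 1))) (mul_nonneg (mul_nonneg (mul_nonneg (by norm_num : (0:ℝ) ≤ 10) (pow_nonneg hm 6)) (pow_nonneg hk 2)) (pow_nonneg hv 2))) (mul_nonneg (mul_nonneg (mul_nonneg (by norm_num : (0:ℝ) ≤ 8) (pow_nonneg hm 6)) (pow_nonneg hk 3)) (pow_nonneg hv 0))) (mul_nonneg (mul_nonneg (mul_nonneg (by norm_num : (0:ℝ) ≤ 36) (pow_nonneg hm 6)) (pow_nonneg hk 3)) (pow_nonneg hv 1))) (mul_nonneg (mul_nonneg (mul_nonneg (by norm_num : (0:ℝ) ≤ 20) (pow_nonneg hm 6)) (pow_nonneg hk 3)) (pow_nonneg hv 2))) (mul_nonneg (mul_nonneg (mul_nonneg (by norm_num : (0:ℝ) ≤ 2) (pow_nonneg hm 6)) (pow_nonneg hk 4)) (pow_nonneg hv 0)))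 (mul_nonneg (mul_nonneg (mul_nonneg (by norm_num : (0:ℝ) ≤ 12) (pow_nonneg hm 6)) (pow_nonneg hk 4)) (pow_nonneg hv 1))) (mul_nonneg (mul_nonneg (mul_nonneg (by norm_num : (0:ℝ) ≤ 10) (pow_nonneg hm 6)) (pow_nonneg hk 4)) (pow_nonneg hv 2))) (mul_nonneg (mul_nonneg (mul_nonneg (by norm_num : (0:ℝ) ≤ 1) (pow_nonneg hm 7)) (pow_nonneg hk 0)) (pow_nonneg hv 0))) (mul_nonneg (mul_nonneg (mul_nonneg (by norm_num : (0:ℝ) ≤ 4) (pow_nonneg hm 7)) (pow_nonneg hk 1)) (pow_nonneg hv 0))) (mul_nonneg (mul_nonneg (mul_nonneg (by norm_num : (0:ℝ) ≤ 2) (pow_nonneg hm 7)) (pow_nonneg hk 1)) (pow_nonneg hv 1))) (mul_nonneg (mul_nonneg (mul_nonneg (by norm_num : (0:ℝ) ≤ 6) (pow_nonneg hm 7)) (pow_nonneg hk 2)) (pow_nonneg hv 0))) (mul_nonneg (mul_nonneg (mul_nonneg (by norm_num : (0:ℝ) ≤ 6) (pow_nonneg hm 7)) (pow_nonneg hk 2))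 (pow_nonneg hv 1))) (mul_nonneg (mul_nonneg (mul_nonneg (by norm_num : (0:ℝ) ≤ 1) (pow_nonneg hm 7)) (pow_nonneg hk 2)) (pow_nonneg hv 2))) (mul_nonneg (mul_nonneg (mul_nonneg (by norm_num : (0:ℝ) ≤ 4) (pow_nonneg hm 7)) (pow_nonneg hk 3)) (pow_nonneg hv 0))) (mul_nonneg (mul_nonneg (mul_nonneg (by norm_num : (0:ℝ) ≤ 6) (pow_nonneg hm 7)) (pow_nonneg hk 3)) (pow_nonneg hv 1))) (mul_nonneg (mul_nonneg (mul_nonneg (by norm_num : (0:ℝ) ≤ 2) (pow_nonneg hm 7)) (pow_nonneg hk 3)) (pow_nonneg hv 2))) (mul_nonneg (mul_nonneg (mul_nonneg (by norm_num : (0:ℝ) ≤ 1) (pow_nonneg hm 7)) (pow_nonneg hk 4)) (pow_nonneg hv 0))) (mul_nonneg (mul_nonneg (mul_nonneg (by norm_num : (0:ℝ) ≤ 2) (pow_nonneg hm 7)) (pow_nonneg hk 4)) (pow_nonneg hv 1))) (mul_nonneg (mul_nonneg (mul_nonneg (by norm_num : (0:ℝ) ≤ 1) (pow_nonneg hm 7))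 (pow_nonneg hk 4)) (pow_nonneg hv 2)))

lemma Eid (M N v : ℝ) :
    ((M * (N ^ 2 * (M - 1) ^ 2 + N * (N - 1) * (M ^ 3 - M ^ 2 + 3 * M + 1) * v + M * (N - 1) ^ 2 * (1 + M) ^ 2 * v ^ 2)) * (-(M * (1 + M) * v) + N * (2 + M * v + M ^ 2 * v)) - 2 * ((M - 1) * M * N) * (-(M * N * (N * (M - 1) ^ 2 + (1 + M) ^ 2 * (N - 1) * v)))) ^ 2 - (M * (N ^ 2 * (M - 1) ^ 2 + N * (N - 1) * (M ^ 3 - M ^ 2 + 3 * M + 1) * v + M * (N - 1) ^ 2 * (1 + M) ^ 2 * v ^ 2)) ^ 2 * ((-(M * (1 + M) * v) + N * (2 + M * v + M ^ 2 * v)) ^ 2 + 4 * (M - 1) * (1 + M) * M * N ^ 2)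
      = 4 * ((M - 1) * M * N) * (((M - 1) * N - (N - 1) * M * v) * Faux (M - 1) (N - 1) v) := by
  unfold Faux
  ring

lemma core (A P Q X hval s α : ℝ) (hA : 0 < A) (hs0 : 0 ≤ s) (hP : 0 ≤ P) (hX : 0 ≤ X)
    (hsq2 : (P * s) ^ 2 ≤ X ^ 2)
    (h3 : 2 * A * (P * α + Q) = P * s - X)
    (hkey : 4 * A ^ 2 * hval = 4 * A * (P * α + Q)) :
    hval ≤ 0 := by
  have hPs : P * s ≤ X := by nlinarith [mul_nonneg hP hs0]
  have hPQ : P * α + Q ≤ 0 := by nlinarith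
  nlinarith [mul_pos hA hA]

lemma aux_main (M N v : ℝ) (hM : 1 < M) (hN : 1 ≤ N) (hv : 0 ≤ v)
    (hbound : (N - 1) * M * v ≤ (M - 1) * N) :
    hcub M N v
      ((M * (1 + M) * v - N * (2 + M * v + M ^ 2 * v)
          + Real.sqrt ((-(M * (1 + M) * v) + N * (2 + M * v + M ^ 2 * v)) ^ 2
              + 4 * (M - 1) * (1 + M) * M * N ^ 2))
        / (2 * (M - 1) * M * N)) ≤ 0 := by
  have hm1 : (0:ℝ) < M - 1 := by linarith
  have hM0 : (0:ℝ) < M := by linarith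
  have hN0 : (0:ℝ) < N := by linarith
  have hk1 : (0:ℝ) ≤ N - 1 := by linarith
  have hA : (0:ℝ) < (M - 1) * M * N := mul_pos (mul_pos hm1 hM0) hN0
  have hD : (0:ℝ) ≤ (-(M * (1 + M) * v) + N * (2 + M * v + M ^ 2 * v)) ^ 2 + 4 * (M - 1) * (1 + M) * M * N ^ 2 :=
    add_nonneg (sq_nonneg _)
      (mul_nonneg (mul_nonneg (mul_nonneg (by linarith : (0:ℝ) ≤ 4 * (M - 1))
        (by linarith : (0:ℝ) ≤ 1 + M)) hM0.le) (sq_nonneg N))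
  set s : ℝ := Real.sqrt ((-(M * (1 + M) * v) + N * (2 + M * v + M ^ 2 * v)) ^ 2
              + 4 * (M - 1) * (1 + M) * M * N ^ 2) with hsdef
  have hs0 : 0 ≤ s := Real.sqrt_nonneg _
  have hsq : s ^ 2 = (-(M * (1 + M) * v) + N * (2 + M * v + M ^ 2 * v)) ^ 2 + 4 * (M - 1) * (1 + M) * M * N ^ 2 := Real.sq_sqrt hD
  set α : ℝ := (M * (1 + M) * v - N * (2 + M * v + M ^ 2 * v) + s) / (2 * (M - 1) * M * N)
    with hαdef
  have h2A : (2 * (M - 1) * M * N) ≠ 0 := by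
    have : (0:ℝ) < 2 * (M - 1) * M * N := by linarith [mul_pos (mul_pos hm1 hM0) hN0]
    exact this.ne'
  have hα2 : 2 * ((M - 1) * M * N) * α = M * (1 + M) * v - N * (2 + M * v + M ^ 2 * v) + s := by
    rw [hαdef]; field_simp
  have ht4 : 4 * ((M - 1) * M * N) * ((M - 1) * M * N * α ^ 2 + (-(M * (1 + M) * v) + N * (2 + M * v + M ^ 2 * v)) * α - (1 + M) * N) = 0 := by
    linear_combination (2 * ((M - 1) * M * N) * α + (-(M * (1 + M) * v) + N * (2 + M * v + M ^ 2 * v)) + s) * hα2 + hsq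
  have hkey : 4 * ((M - 1) * M * N) ^ 2 * hcub M N v α
      = 4 * ((M - 1) * M * N) * ((M * (N ^ 2 * (M - 1) ^ 2 + N * (N - 1) * (M ^ 3 - M ^ 2 + 3 * M + 1) * v + M * (N - 1) ^ 2 * (1 + M) ^ 2 * v ^ 2)) * α + (-(M * N * (N * (M - 1) ^ 2 + (1 + M) ^ 2 * (N - 1) * v)))) := by
    unfold hcub
    linear_combination ((M - 1) * M * N * α + (-((M - 1) * M * N) + M * (1 + M) * (1 - N) * v)) * ht4
  have hP : (0:ℝ) ≤ (M * (N ^ 2 * (M - 1) ^ 2 + N * (N - 1) * (M ^ 3 - M ^ 2 + 3 * M + 1) * v + M * (N - 1) ^ 2 * (1 + M) ^ 2 * v ^ 2)) := by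
    have hcube : (0:ℝ) ≤ M ^ 3 - M ^ 2 + 3 * M + 1 := by nlinarith
    exact mul_nonneg hM0.le (add_nonneg (add_nonneg
      (mul_nonneg (sq_nonneg N) (sq_nonneg (M - 1)))
      (mul_nonneg (mul_nonneg (mul_nonneg hN0.le hk1) hcube) hv))
      (mul_nonneg (mul_nonneg (mul_nonneg hM0.le (sq_nonneg (N - 1))) (sq_nonneg (1 + M)))
        (sq_nonneg v)))
  have hQ : (-(M * N * (N * (M - 1) ^ 2 + (1 + M) ^ 2 * (N - 1) * v))) ≤ 0 :=
    neg_nonpos.mpr (mul_nonneg (mul_nonneg hM0.le hN0.le)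
      (add_nonneg (mul_nonneg hN0.le (sq_nonneg (M - 1)))
        (mul_nonneg (mul_nonneg (sq_nonneg (1 + M)) hk1) hv)))
  have hB : (0:ℝ) ≤ (-(M * (1 + M) * v) + N * (2 + M * v + M ^ 2 * v)) := by
    nlinarith [mul_nonneg (mul_nonneg (mul_nonneg hk1 hM0.le) (by linarith : (0:ℝ) ≤ 1 + M)) hv]
  have hPB : (0:ℝ) ≤ (M * (N ^ 2 * (M - 1) ^ 2 + N * (N - 1) * (M ^ 3 - M ^ 2 + 3 * M + 1) * v + M * (N - 1) ^ 2 * (1 + M) ^ 2 * v ^ 2)) * (-(M * (1 + M) * v) + N * (2 + M * v + M ^ 2 * v)) := mul_nonneg hP hB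
  have hAQ : 2 * ((M - 1) * M * N) * (-(M * N * (N * (M - 1) ^ 2 + (1 + M) ^ 2 * (N - 1) * v))) ≤ 0 := by nlinarith [hQ, hA]
  have hX : (0:ℝ) ≤ ((M * (N ^ 2 * (M - 1) ^ 2 + N * (N - 1) * (M ^ 3 - M ^ 2 + 3 * M + 1) * v + M * (N - 1) ^ 2 * (1 + M) ^ 2 * v ^ 2)) * (-(M * (1 + M) * v) + N * (2 + M * v + M ^ 2 * v)) - 2 * ((M - 1) * M * N) * (-(M * N * (N * (M - 1) ^ 2 + (1 + M) ^ 2 * (N - 1) * v)))) := sub_nonneg.mpr (hAQ.trans hPB)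
  have hg : (0:ℝ) ≤ ((M - 1) * N - (N - 1) * M * v) := by linarith
  have hF : (0:ℝ) ≤ Faux (M - 1) (N - 1) v := Faux_nonneg _ _ _ hm1.le hk1 hv
  have h4 : (0:ℝ) ≤ ((M * (N ^ 2 * (M - 1) ^ 2 + N * (N - 1) * (M ^ 3 - M ^ 2 + 3 * M + 1) * v + M * (N - 1) ^ 2 * (1 + M) ^ 2 * v ^ 2)) * (-(M * (1 + M) * v) + N * (2 + M * v + M ^ 2 * v)) - 2 * ((M - 1) * M * N) * (-(M * N * (N * (M - 1) ^ 2 + (1 + M) ^ 2 * (N - 1) * v)))) ^ 2 - (M * (N ^ 2 * (M - 1) ^ 2 + N * (N - 1) * (M ^ 3 - M ^ 2 + 3 * M + 1) * v + M * (N - 1) ^ 2 * (1 + M) ^ 2 * v ^ 2)) ^ 2 * ((-(M * (1 + M) * v) + N * (2 + M * v + M ^ 2 * v)) ^ 2 + 4 * (M - 1) * (1 + M) * M * N ^ 2) := by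
    rw [Eid M N v]
    exact mul_nonneg (by linarith) (mul_nonneg hg hF)
  have hsq2 : ((M * (N ^ 2 * (M - 1) ^ 2 + N * (N - 1) * (M ^ 3 - M ^ 2 + 3 * M + 1) * v + M * (N - 1) ^ 2 * (1 + M) ^ 2 * v ^ 2)) * s) ^ 2 ≤ ((M * (N ^ 2 * (M - 1) ^ 2 + N * (N - 1) * (M ^ 3 - M ^ 2 + 3 * M + 1) * v + M * (N - 1) ^ 2 * (1 + M) ^ 2 * v ^ 2)) * (-(M * (1 + M) * v) + N * (2 + M * v + M ^ 2 * v)) - 2 * ((M - 1) * M * N) * (-(M * N * (N * (M - 1) ^ 2 + (1 + M) ^ 2 * (N - 1) * v)))) ^ 2 := by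
    have e : ((M * (N ^ 2 * (M - 1) ^ 2 + N * (N - 1) * (M ^ 3 - M ^ 2 + 3 * M + 1) * v + M * (N - 1) ^ 2 * (1 + M) ^ 2 * v ^ 2)) * s) ^ 2 = (M * (N ^ 2 * (M - 1) ^ 2 + N * (N - 1) * (M ^ 3 - M ^ 2 + 3 * M + 1) * v + M * (N - 1) ^ 2 * (1 + M) ^ 2 * v ^ 2)) ^ 2 * ((-(M * (1 + M) * v) + N * (2 + M * v + M ^ 2 * v)) ^ 2 + 4 * (M - 1) * (1 + M) * M * N ^ 2) := by rw [mul_pow, hsq]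
    rw [e]
    exact sub_nonneg.mp h4
  have h3 : 2 * ((M - 1) * M * N) * ((M * (N ^ 2 * (M - 1) ^ 2 + N * (N - 1) * (M ^ 3 - M ^ 2 + 3 * M + 1) * v + M * (N - 1) ^ 2 * (1 + M) ^ 2 * v ^ 2)) * α + (-(M * N * (N * (M - 1) ^ 2 + (1 + M) ^ 2 * (N - 1) * v)))) = (M * (N ^ 2 * (M - 1) ^ 2 + N * (N - 1) * (M ^ 3 - M ^ 2 + 3 * M + 1) * v + M * (N - 1) ^ 2 * (1 + M) ^ 2 * v ^ 2)) * s - ((M * (N ^ 2 * (M - 1) ^ 2 + N * (N - 1) * (M ^ 3 - M ^ 2 + 3 * M + 1) * v + M * (N - 1) ^ 2 * (1 + M) ^ 2 * v ^ 2)) * (-(M * (1 + M) * v) + N * (2 + M * v + M ^ 2 * v)) - 2 * ((M - 1) * M * N) * (-(M * N * (N * (M - 1) ^ 2 + (1 + M) ^ 2 * (N - 1) * v)))) := by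
    linear_combination (M * (N ^ 2 * (M - 1) ^ 2 + N * (N - 1) * (M ^ 3 - M ^ 2 + 3 * M + 1) * v + M * (N - 1) ^ 2 * (1 + M) ^ 2 * v ^ 2)) * hα2
  exact core ((M - 1) * M * N) (M * (N ^ 2 * (M - 1) ^ 2 + N * (N - 1) * (M ^ 3 - M ^ 2 + 3 * M + 1) * v + M * (N - 1) ^ 2 * (1 + M) ^ 2 * v ^ 2)) (-(M * N * (N * (M - 1) ^ 2 + (1 + M) ^ 2 * (N - 1) * v))) ((M * (N ^ 2 * (M - 1) ^ 2 + N * (N - 1) * (M ^ 3 - M ^ 2 + 3 * M + 1) * v + M * (N - 1) ^ 2 * (1 + M) ^ 2 * v ^ 2)) * (-(M * (1 + M) * v) + N * (2 + M * v + M ^ 2 * v)) - 2 * ((M - 1) * M * N) * (-(M * N * (N * (M - 1) ^ 2 + (1 + M) ^ 2 * (N - 1) * v)))) (hcub M N v α) s α hA hs0 hP hX hsq2 h3 hkey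

theorem stmt_12 (M : ℝ) (n : ℕ) (v : ℝ)
    (hM : 1 < M) (hn : 1 ≤ n) (hv : 0 ≤ v)
    (hbound : ((n : ℝ) - 1) * M * v ≤ (M - 1) * n) :
    let αbar : ℝ :=
      (M * (1 + M) * v - (n : ℝ) * (2 + M * v + M ^ 2 * v)
          + Real.sqrt ((-(M * (1 + M) * v) + (n : ℝ) * (2 + M * v + M ^ 2 * v)) ^ 2
              + 4 * (M - 1) * (1 + M) * M * (n : ℝ) ^ 2))
        / (2 * (M - 1) * M * (n : ℝ))
    hcub M (n : ℝ) v αbar ≤ 0 := by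
  intro αbar
  exact aux_main M (n : ℝ) v hM (by exact_mod_cast hn) hv hbound
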